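/- Let G be a finite connected simple graph on n vertices with real edge weights w satisfying 1 ≤ w(e) ≤ α^L for every edge e, where α > 1 is a real number and L is a natural number. Let T be a minimum spanning tree of G, and for 0 ≤ k ≤ L let c_k denote the number of connected components of G_{≤ α^k}, and set c_{−1} := n. Then ∑_{k=0}^{L} α^k (c_{k−1} − c_k) ≤ α · ∑_{e ∈ E(T)} w(e). -/

import Mathlib

open SimpleGraph Finset
open scoped Classical

/-- The threshold graph `G_{≤ t}`: the spanning subgraph of `G` consisting of the
edges of weight at most `t`. -/
noncomputable def levelGraph {V : Type*} (G : SimpleGraph V) (w : Sym2 V → ℝ) (t : ℝ) :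
    SimpleGraph V :=
  SimpleGraph.fromEdgeSet {e ∈ G.edgeSet | w e ≤ t}

/-- monotonicity of the number of connected components -/
lemma aux_cc_card_le {V : Type*} [Fintype V] {H H' : SimpleGraph V} (h : H ≤ H') :
    Nat.card H'.ConnectedComponent ≤ Nat.card H.ConnectedComponent := by
  apply Nat.card_le_card_of_surjective
    (SimpleGraph.ConnectedComponent.map (SimpleGraph.Hom.ofLE h))
  intro d
  refine d.ind fun v => ⟨H.connectedComponentMk v, ?_⟩
  simp

/-- reachability after deleting one edge -/
lemma aux_reach {V : Type*} {H : SimpleGraph V} {u v x y : V} (p : H.Walk x y) :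
    (H.deleteEdges {s(u, v)}).Reachable x y ∨
      ((H.deleteEdges {s(u, v)}).Reachable x u ∧ (H.deleteEdges {s(u, v)}).Reachable v y) ∨
      ((H.deleteEdges {s(u, v)}).Reachable x v ∧ (H.deleteEdges {s(u, v)}).Reachable u y) := by
  set H' := H.deleteEdges {s(u, v)} with hH'
  induction p with
  | nil => exact Or.inl (Reachable.refl _)
  | @cons a b yy hab p ih =>
    by_cases he : s(a, b) = s(u, v)
    · rw [Sym2.eq_iff] at he
      rcases he with ⟨rfl, rfl⟩ | ⟨rfl, rfl⟩
      · -- a = u, b = v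
        rcases ih with h1 | ⟨h1, h2⟩ | ⟨h1, h2⟩
        · exact Or.inr (Or.inl ⟨Reachable.refl _, h1⟩)
        · exact Or.inl (h1.symm.trans h2)
        · exact Or.inl h2
      · -- a = v, b = u
        rcases ih with h1 | ⟨h1, h2⟩ | ⟨h1, h2⟩
        · exact Or.inr (Or.inr ⟨Reachable.refl _, h1⟩)
        · exact Or.inl h2
        · exact Or.inl (h1.symm.trans h2)
    · have hadj : H'.Adj a b := by
        rw [hH', SimpleGraph.deleteEdges_adj]
        exact ⟨hab, by simpa using he⟩
      rcases ih with h1 | ⟨h1, h2⟩ | ⟨h1, h2⟩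
      · exact Or.inl (hadj.reachable.trans h1)
      · exact Or.inr (Or.inl ⟨hadj.reachable.trans h1, h2⟩)
      · exact Or.inr (Or.inr ⟨hadj.reachable.trans h1, h2⟩)

/-- deleting one edge increases the number of components by at most one -/
lemma aux_delete_one {V : Type*} [Fintype V] (H : SimpleGraph V) (e : Sym2 V) :
    Nat.card (H.deleteEdges {e}).ConnectedComponent ≤ Nat.card H.ConnectedComponent + 1 := by
  obtain ⟨u, v⟩ := e
  set H' := H.deleteEdges {s(u, v)} with hH'
  set f : H'.ConnectedComponent → Option H.ConnectedComponent := fun D =>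
    if D = H'.connectedComponentMk v ∧
        H'.connectedComponentMk u ≠ H'.connectedComponentMk v then none
    else some (D.map (SimpleGraph.Hom.ofLE (SimpleGraph.deleteEdges_le _)))
    with hf
  have hinj : Function.Injective f := by
    intro D1 D2 hD
    by_cases h1 : D1 = H'.connectedComponentMk v ∧
        H'.connectedComponentMk u ≠ H'.connectedComponentMk v <;>
      by_cases h2 : D2 = H'.connectedComponentMk v ∧
        H'.connectedComponentMk u ≠ H'.connectedComponentMk v
    · exact h1.1.trans h2.1.symm
    · simp only [hf, if_pos h1, if_neg h2] at hD; exact absurd hD (by simp)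
    · simp only [hf, if_neg h1, if_pos h2] at hD; exact absurd hD (by simp)
    · simp only [hf, if_neg h1, if_neg h2, Option.some_inj] at hD
      revert hD h1 h2
      refine D1.ind fun x => D2.ind fun y => ?_
      intro h1 h2 hD
      simp only [SimpleGraph.ConnectedComponent.map_mk,
        SimpleGraph.Hom.ofLE_apply,
        SimpleGraph.ConnectedComponent.eq] at hD ⊢
      replace hD : H.Reachable x y := SimpleGraph.ConnectedComponent.exact hD
      obtain ⟨p⟩ := hD
      rcases aux_reach (u := u) (v := v) p with hr | ⟨ha, hb⟩ | ⟨ha, hb⟩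
      · exact hr
      · -- x ~ u, v ~ y in H'
        by_cases huv : H'.connectedComponentMk u = H'.connectedComponentMk v
        · rw [SimpleGraph.ConnectedComponent.eq] at huv
          exact ha.trans (huv.trans hb)
        · exact absurd ⟨by rw [SimpleGraph.ConnectedComponent.eq]; exact hb.symm, huv⟩ h2
      · by_cases huv : H'.connectedComponentMk u = H'.connectedComponentMk v
        · rw [SimpleGraph.ConnectedComponent.eq] at huv
          exact ha.trans (huv.symm.trans hb)
        · exact absurd ⟨by rw [SimpleGraph.ConnectedComponent.eq]; exact ha, huv⟩ h1
  calc Nat.card H'.ConnectedComponent ≤ Nat.card (Option H.ConnectedComponent) :=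
        Nat.card_le_card_of_injective f hinj
    _ = Nat.card H.ConnectedComponent + 1 := Finite.card_option

/-- deleting a finite set of edges from a connected graph leaves at most `card + 1`
components -/
lemma aux_delete_finset {V : Type*} [Fintype V] {H : SimpleGraph V} (hH : H.Connected)
    (s : Finset (Sym2 V)) :
    Nat.card (H.deleteEdges ↑s).ConnectedComponent ≤ s.card + 1 := by
  classical
  induction s using Finset.induction_on with
  | empty =>
    simp only [Finset.coe_empty, SimpleGraph.deleteEdges_empty, Finset.card_empty, zero_add]
    have h1 : Subsingleton H.ConnectedComponent := by
      constructor
      intro a b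
      refine a.ind fun x => b.ind fun y => ?_
      rw [SimpleGraph.ConnectedComponent.eq]
      exact hH.preconnected x y
    have h2 : Nonempty H.ConnectedComponent := ⟨H.connectedComponentMk hH.nonempty.some⟩
    exact le_of_eq (Nat.card_eq_one_iff_unique.mpr ⟨h1, h2⟩)
  | @insert e s he ih =>
    have hset : (↑(insert e s) : Set (Sym2 V)) = ↑s ∪ {e} := by
      ext x; simp [or_comm]
    have heq : H.deleteEdges ↑(insert e s) = (H.deleteEdges ↑s).deleteEdges {e} := by
      rw [SimpleGraph.deleteEdges_deleteEdges, hset]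
    rw [heq]
    calc Nat.card ((H.deleteEdges ↑s).deleteEdges {e}).ConnectedComponent
        ≤ Nat.card (H.deleteEdges ↑s).ConnectedComponent + 1 := aux_delete_one _ _
      _ ≤ s.card + 1 + 1 := by omega
      _ = (insert e s).card + 1 := by rw [Finset.card_insert_of_notMem he]

/-- Abel summation identity used below -/
lemma aux_abel (α : ℝ) (u : ℕ → ℝ) (L : ℕ) :
    ∑ k ∈ Finset.range (L + 1), α ^ k * (u k - u (k + 1)) =
      u 0 + ∑ k ∈ Finset.range L, (α ^ (k + 1) - α ^ k) * u (k + 1) - α ^ L * u (L + 1) := by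
  induction L with
  | zero => simp
  | succ L ih =>
    rw [Finset.sum_range_succ, ih, Finset.sum_range_succ]
    ring

lemma aux_chi_le_pow {α : ℝ} (hα : 1 < α) (x : ℝ) (L : ℕ) :
    1 + ∑ k ∈ Finset.range L, (if α ^ k < x then α ^ (k + 1) - α ^ k else 0) ≤ α ^ L := by
  induction L with
  | zero => simp
  | succ L ih =>
    rw [Finset.sum_range_succ, ← add_assoc]
    by_cases h : α ^ L < x
    · rw [if_pos h]; nlinarith [pow_pos (lt_trans one_pos hα) L, pow_succ α L]
    · rw [if_neg h, add_zero]
      calc (1 : ℝ) + ∑ k ∈ Finset.range L, (if α ^ k < x then α ^ (k + 1) - α ^ k else 0)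
          ≤ α ^ L := ih
        _ ≤ α ^ (L + 1) := by nlinarith [pow_pos (lt_trans one_pos hα) L, pow_succ α L]

lemma aux_chi_le {α : ℝ} (hα : 1 < α) {x : ℝ} (hx : 1 ≤ x) (L : ℕ) :
    1 + ∑ k ∈ Finset.range L, (if α ^ k < x then α ^ (k + 1) - α ^ k else 0) ≤ α * x := by
  induction L with
  | zero => simp; nlinarith
  | succ L ih =>
    rw [Finset.sum_range_succ, ← add_assoc]
    by_cases h : α ^ L < x
    · rw [if_pos h]
      have h1 := aux_chi_le_pow hα x L
      have hαL : (0 : ℝ) < α ^ L := pow_pos (lt_trans one_pos hα) L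
      have h2 : (1 : ℝ) + ∑ k ∈ Finset.range L, (if α ^ k < x then α ^ (k + 1) - α ^ k else 0)
          + (α ^ (L + 1) - α ^ L) ≤ α ^ (L + 1) := by linarith
      calc _ ≤ α ^ (L + 1) := h2
        _ = α * α ^ L := by ring
        _ ≤ α * x := by nlinarith [pow_pos (lt_trans one_pos hα) L]
    · rw [if_neg h, add_zero]; exact ih

set_option maxHeartbeats 1000000 in
/-- if all weights lie in `[1, α^L]` and `c k` is the number of connected
components of `G_{≤ α^k}` (with `c_{-1} := n`), then
`∑_{k=0}^{L} α^k (c_{k-1} - c_k) ≤ α ⬝ w(MST)`. -/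
theorem stmt_12 {V : Type*} [Fintype V] (n : ℕ) (hcard : Fintype.card V = n)
    (G : SimpleGraph V) (hG : G.Connected) (w : Sym2 V → ℝ)
    (α : ℝ) (hα : 1 < α) (L : ℕ)
    (hw : ∀ e ∈ G.edgeSet, 1 ≤ w e ∧ w e ≤ α ^ L)
    (T : SimpleGraph V) (hTG : T ≤ G) (hT : T.IsTree)
    (hmin : ∀ T' : SimpleGraph V, T' ≤ G → T'.IsTree →
      ∑ e ∈ T.edgeFinset, w e ≤ ∑ e ∈ T'.edgeFinset, w e)
    (c : ℕ → ℕ)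
    (hc : ∀ k ≤ L, c k = Nat.card (levelGraph G w (α ^ k)).ConnectedComponent) :
    ∑ k ∈ Finset.range (L + 1),
        α ^ k * ((if k = 0 then (n : ℝ) else (c (k - 1) : ℝ)) - (c k : ℝ))
      ≤ α * ∑ e ∈ T.edgeFinset, w e := by
  classical
  have hα0 : (0 : ℝ) < α := lt_trans one_pos hα
  -- the heavy-edge count
  set h : ℕ → ℕ := fun k => (T.edgeFinset.filter (fun e => α ^ k < w e)).card with hh
  -- key claim: c k ≤ 1 + h k for k ≤ L
  have key : ∀ k ≤ L, (c k : ℝ) ≤ 1 + (h k : ℝ) := by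
    intro k hk
    rw [hc k hk]
    have hle : T.deleteEdges ↑(T.edgeFinset.filter (fun e => α ^ k < w e))
        ≤ levelGraph G w (α ^ k) := by
      intro a b hab
      rw [SimpleGraph.deleteEdges_adj] at hab
      obtain ⟨hab', hnot⟩ := hab
      have hG' : G.Adj a b := hTG hab'
      rw [levelGraph, SimpleGraph.fromEdgeSet_adj]
      refine ⟨⟨G.mem_edgeSet.mpr hG', ?_⟩, hG'.ne⟩
      by_contra hcon
      push_neg at hcon
      exact hnot (by
        simp only [Finset.coe_filter, Set.mem_setOf_eq]
        exact ⟨SimpleGraph.mem_edgeFinset.mpr (T.mem_edgeSet.mpr hab'), hcon⟩)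
    have h1 := aux_cc_card_le hle
    have h2 := aux_delete_finset hT.isConnected (T.edgeFinset.filter (fun e => α ^ k < w e))
    have h3 := h1.trans h2
    have h4 := (Nat.cast_le (α := ℝ)).mpr h3
    have hhk : (h k : ℝ) = ((T.edgeFinset.filter (fun e => α ^ k < w e)).card : ℝ) := by
      simp only [hh]
    push_cast at h4
    rw [hhk]
    linarith
  -- c L ≥ 1
  have hcL : (1 : ℝ) ≤ (c L : ℝ) := by
    rw [hc L le_rfl]
    have hne : Nonempty (levelGraph G w (α ^ L)).ConnectedComponent :=
      ⟨(levelGraph G w (α ^ L)).connectedComponentMk hG.nonempty.some⟩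
    exact_mod_cast Nat.card_pos
  -- number of vertices
  have hn1 : 1 ≤ n := by
    rw [← hcard]
    exact Fintype.card_pos_iff.mpr hG.nonempty
  have hedges : (T.edgeFinset.card : ℝ) = (n : ℝ) - 1 := by
    have h1 := hT.card_edgeFinset
    rw [hcard] at h1
    have h2 : T.edgeFinset.card = n - 1 := by omega
    rw [h2, Nat.cast_sub hn1, Nat.cast_one]
  -- rewrite the sum via u
  set u : ℕ → ℝ := fun k => if k = 0 then (n : ℝ) else (c (k - 1) : ℝ) with hu
  have hsum_eq : ∑ k ∈ Finset.range (L + 1),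
      α ^ k * ((if k = 0 then (n : ℝ) else (c (k - 1) : ℝ)) - (c k : ℝ)) =
      ∑ k ∈ Finset.range (L + 1), α ^ k * (u k - u (k + 1)) := by
    refine Finset.sum_congr rfl fun k _ => ?_
    simp [hu]
  rw [hsum_eq, aux_abel]
  have hu0 : u 0 = (n : ℝ) := by simp [hu]
  have husucc : ∀ k, u (k + 1) = (c k : ℝ) := fun k => by simp [hu]
  -- expand h k as a sum over edges
  have hh_expand : ∀ k, ((h k : ℝ)) =
      ∑ e ∈ T.edgeFinset, (if α ^ k < w e then (1 : ℝ) else 0) := by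
    intro k
    rw [hh]
    simp [Finset.sum_boole]
  -- bound the middle sum, rewritten by edge
  have hmid : ∑ k ∈ Finset.range L, (α ^ (k + 1) - α ^ k) * u (k + 1)
      ≤ (α ^ L - 1) + ∑ e ∈ T.edgeFinset,
          ∑ k ∈ Finset.range L, (if α ^ k < w e then α ^ (k + 1) - α ^ k else 0) := by
    have step1 : ∑ k ∈ Finset.range L, (α ^ (k + 1) - α ^ k) * u (k + 1)
        ≤ ∑ k ∈ Finset.range L, (α ^ (k + 1) - α ^ k) * (1 + (h k : ℝ)) := by
      refine Finset.sum_le_sum fun k hk => ?_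
      rw [husucc]
      have hcoef : (0 : ℝ) ≤ α ^ (k + 1) - α ^ k := by nlinarith [pow_pos hα0 k, pow_succ α k]
      exact mul_le_mul_of_nonneg_left (key k (le_of_lt (Finset.mem_range.mp hk))) hcoef
    have step2 : ∑ k ∈ Finset.range L, (α ^ (k + 1) - α ^ k) * (1 + (h k : ℝ))
        = (α ^ L - 1) + ∑ e ∈ T.edgeFinset,
            ∑ k ∈ Finset.range L, (if α ^ k < w e then α ^ (k + 1) - α ^ k else 0) := by
      have hconst : ∑ k ∈ Finset.range L, (α ^ (k + 1) - α ^ k) = α ^ L - 1 := by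
        rw [Finset.sum_range_sub (fun k => α ^ k)]
        simp
      have hterm : ∀ k, (α ^ (k + 1) - α ^ k) * (1 + (h k : ℝ))
          = (α ^ (k + 1) - α ^ k) + ∑ e ∈ T.edgeFinset,
              (if α ^ k < w e then α ^ (k + 1) - α ^ k else 0) := by
        intro k
        rw [mul_add, mul_one, hh_expand k, Finset.mul_sum]
        congr 1
        refine Finset.sum_congr rfl fun e _ => ?_
        split <;> simp
      calc ∑ k ∈ Finset.range L, (α ^ (k + 1) - α ^ k) * (1 + (h k : ℝ))
          = ∑ k ∈ Finset.range L, ((α ^ (k + 1) - α ^ k) + ∑ e ∈ T.edgeFinset,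
              (if α ^ k < w e then α ^ (k + 1) - α ^ k else 0)) :=
            Finset.sum_congr rfl fun k _ => hterm k
        _ = (α ^ L - 1) + ∑ k ∈ Finset.range L, ∑ e ∈ T.edgeFinset,
              (if α ^ k < w e then α ^ (k + 1) - α ^ k else 0) := by
            rw [Finset.sum_add_distrib, hconst]
        _ = (α ^ L - 1) + ∑ e ∈ T.edgeFinset, ∑ k ∈ Finset.range L,
              (if α ^ k < w e then α ^ (k + 1) - α ^ k else 0) := by
            rw [Finset.sum_comm]
    linarith [step1, le_of_eq step2]
  -- per-edge bound
  have hperedge : ∑ e ∈ T.edgeFinset, ((1 : ℝ) + ∑ k ∈ Finset.range L,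
      (if α ^ k < w e then α ^ (k + 1) - α ^ k else 0)) ≤ α * ∑ e ∈ T.edgeFinset, w e := by
    rw [Finset.mul_sum]
    refine Finset.sum_le_sum fun e heT => ?_
    have heG : e ∈ G.edgeSet :=
      (SimpleGraph.edgeSet_subset_edgeSet.mpr hTG) (SimpleGraph.mem_edgeFinset.mp heT)
    exact aux_chi_le hα (hw e heG).1 L
  have hsplit : ∑ e ∈ T.edgeFinset, ((1 : ℝ) + ∑ k ∈ Finset.range L,
      (if α ^ k < w e then α ^ (k + 1) - α ^ k else 0))
      = ((n : ℝ) - 1) + ∑ e ∈ T.edgeFinset, ∑ k ∈ Finset.range L,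
          (if α ^ k < w e then α ^ (k + 1) - α ^ k else 0) := by
    rw [Finset.sum_add_distrib, Finset.sum_const, nsmul_eq_mul, mul_one, hedges]
  -- last term
  have hlast : α ^ L * 1 ≤ α ^ L * u (L + 1) := by
    rw [husucc]
    exact mul_le_mul_of_nonneg_left hcL (le_of_lt (pow_pos hα0 L))
  rw [hu0]
  have hαL : (0 : ℝ) < α ^ L := pow_pos hα0 L
  nlinarith [hmid, hperedge, hsplit, hlast]
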